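/- If L is a stable triplet cover of a fully-resolved X-tree T with n := |X| ≥ 3, then the graph (X, L) is a 2d-tree. -/

import Mathlib

open SimpleGraph

/-- An `X`-tree: a finite tree whose leaf set is (the image of) `X`,
with no vertices of degree 2. -/
structure XTree (α : Type) (X : Set α) where
  V : Type
  fintypeV : Fintype V
  tree : SimpleGraph V
  isTree : tree.IsTree
  ι : α → V
  ι_injOn : Set.InjOn ι X
  leaf_iff : ∀ v : V, (tree.neighborSet v).ncard = 1 ↔ v ∈ ι '' X
  no_deg_two : ∀ v : V, (tree.neighborSet v).ncard ≠ 2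

namespace XTree

variable {α : Type} {X : Set α}

/-- A vertex is interior if it is not a leaf. -/
def IsInterior (T : XTree α X) (v : T.V) : Prop := v ∉ T.ι '' X

/-- Fully-resolved: every interior vertex has degree 3. -/
def IsFullyResolved (T : XTree α X) : Prop :=
  ∀ v : T.V, T.IsInterior v → (T.tree.neighborSet v).ncard = 3

/-- The unique path between two vertices of the tree. -/
noncomputable def treePath (T : XTree α X) (u v : T.V) : T.tree.Walk u v :=
  (T.isTree.existsUnique_path u v).exists.choose

lemma treePath_isPath (T : XTree α X) (u v : T.V) : (T.treePath u v).IsPath :=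
  (T.isTree.existsUnique_path u v).exists.choose_spec

/-- Weighted path distance between two vertices. -/
noncomputable def pathDist (T : XTree α X) (w : Sym2 T.V → ℝ) (u v : T.V) : ℝ :=
  ((T.treePath u v).edges.map w).sum

lemma treePath_symm (T : XTree α X) (u v : T.V) :
    T.treePath u v = (T.treePath v u).reverse :=
  (T.isTree.existsUnique_path u v).unique (T.treePath_isPath u v)
    ((T.treePath_isPath v u).reverse)

lemma pathDist_symm (T : XTree α X) (w : Sym2 T.V → ℝ) (u v : T.V) :
    T.pathDist w u v = T.pathDist w v u := by
  unfold pathDist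
  rw [treePath_symm, SimpleGraph.Walk.edges_reverse, List.map_reverse, List.sum_reverse]

/-- The induced distance on pairs of leaf labels. -/
noncomputable def cordDist (T : XTree α X) (w : Sym2 T.V → ℝ) : Sym2 α → ℝ :=
  Sym2.lift ⟨fun a b => T.pathDist w (T.ι a) (T.ι b),
    fun a b => T.pathDist_symm w (T.ι a) (T.ι b)⟩

/-- An edge-weighting assigns a nonnegative weight to every edge. -/
def IsEdgeWeighting (T : XTree α X) (w : Sym2 T.V → ℝ) : Prop :=
  ∀ e ∈ T.tree.edgeSet, 0 ≤ w e

/-- A proper edge-weighting gives positive weight to every interior edge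
(i.e. every edge not incident with a leaf). -/
def IsProperWeighting (T : XTree α X) (w : Sym2 T.V → ℝ) : Prop :=
  T.IsEdgeWeighting w ∧ ∀ e ∈ T.tree.edgeSet, (∀ v ∈ e, T.IsInterior v) → 0 < w e

/-- The set of cords (2-element subsets) of `X`. -/
def cords (X : Set α) : Set (Sym2 α) := {c | ¬ c.IsDiag ∧ ∀ a ∈ c, a ∈ X}

/-- Two weighted trees are `L`-isometric if their leaf distances agree on `L`. -/
def LIsometric (T : XTree α X) (w : Sym2 T.V → ℝ) (T' : XTree α X) (w' : Sym2 T'.V → ℝ)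
    (L : Set (Sym2 α)) : Prop :=
  ∀ c ∈ L, T.cordDist w c = T'.cordDist w' c

/-- `L` is an edge-weight lasso for `T`. -/
def IsEdgeWeightLasso (T : XTree α X) (L : Set (Sym2 α)) : Prop :=
  ∀ w w' : Sym2 T.V → ℝ, T.IsProperWeighting w → T.IsProperWeighting w' →
    LIsometric T w T w' L → ∀ e ∈ T.tree.edgeSet, w e = w' e

/-- Two `X`-trees are equivalent if there is a graph isomorphism fixing `X`. -/
def Equivalent (T T' : XTree α X) : Prop :=
  ∃ φ : T.tree ≃g T'.tree, ∀ a ∈ X, φ (T.ι a) = T'.ι a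

/-- `L` is a topological lasso for `T`. -/
def IsTopologicalLasso (T : XTree α X) (L : Set (Sym2 α)) : Prop :=
  ∀ (T' : XTree α X) (w : Sym2 T.V → ℝ) (w' : Sym2 T'.V → ℝ),
    T.IsProperWeighting w → T'.IsProperWeighting w' →
    LIsometric T w T' w' L → Equivalent T T'

/-- `L` is a strong lasso for `T`. -/
def IsStrongLasso (T : XTree α X) (L : Set (Sym2 α)) : Prop :=
  IsEdgeWeightLasso T L ∧ IsTopologicalLasso T L

/-- The set of leaf labels on the side of edge `e` containing endpoint `u`. -/
def sideSet (T : XTree α X) (e : Sym2 T.V) (u : T.V) : Set α :=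
  {a | a ∈ X ∧ (T.tree.deleteEdges {e}).Reachable (T.ι a) u}

/-- The clusters of `T`: leaf sets of the two components of `T - e`, over all edges `e`. -/
def clus (T : XTree α X) : Set (Set α) :=
  {A | ∃ e ∈ T.tree.edgeSet, ∃ u ∈ e, A = T.sideSet e u}

/-- A stable transversal for a collection of subsets of `α`. -/
def IsStableTransversal (C : Set (Set α)) (f : Set α → α) : Prop :=
  (∀ A ∈ C, f A ∈ A) ∧ ∀ A ∈ C, ∀ B ∈ C, f A ∈ B → B ⊆ A → f A = f B

/-- Leaf labels of the component of `T - v` containing the vertex `u`. -/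
def compSet (T : XTree α X) (v u : T.V) : Set α :=
  {a | a ∈ X ∧ ∃ p : T.tree.Walk (T.ι a) u, v ∉ p.support}

/-- The triplet cover `L_{(T,f)}` generated by a transversal `f`. -/
def tripletCoverOf (T : XTree α X) (f : Set α → α) : Set (Sym2 α) :=
  {c | ∃ v u₁ u₂ : T.V, T.IsInterior v ∧ T.tree.Adj v u₁ ∧ T.tree.Adj v u₂ ∧ u₁ ≠ u₂ ∧
    c = s(f (T.compSet v u₁), f (T.compSet v u₂))}

/-- `L` is a stable triplet cover of `T`. -/
def IsStableTripletCover (T : XTree α X) (L : Set (Sym2 α)) : Prop :=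
  ∃ f : Set α → α, IsStableTransversal (clus T) f ∧ L = tripletCoverOf T f

/-- `T|{a,b,c,d}` is the quartet tree `ab||cd`: the four leaves are distinct members
of `X` and the path from `a` to `b` is vertex-disjoint from the path from `c` to `d`. -/
def Quartet (T : XTree α X) (a b c d : α) : Prop :=
  a ∈ X ∧ b ∈ X ∧ c ∈ X ∧ d ∈ X ∧ List.Pairwise (· ≠ ·) [a, b, c, d] ∧
  ∀ (p : T.tree.Walk (T.ι a) (T.ι b)) (q : T.tree.Walk (T.ι c) (T.ι d)),
    p.IsPath → q.IsPath → ∀ v, v ∈ p.support → v ∉ q.support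

/-- The cord `c` admits pivots relative to already-available cords `L ∪ earlier`. -/
def HasPivots (T : XTree α X) (L : Set (Sym2 α)) (earlier : List (Sym2 α))
    (c : Sym2 α) : Prop :=
  ∃ a b p q : α, c = s(a, b) ∧ Quartet T a p q b ∧
    ∀ c' ∈ [s(a, p), s(a, q), s(b, p), s(b, q), s(p, q)], c' ∈ L ∨ c' ∈ earlier

/-- `ord` is a shellable ordering of `cords X - L` with respect to `T`. -/
def IsShellableOrdering (T : XTree α X) (L : Set (Sym2 α)) (ord : List (Sym2 α)) : Prop :=
  ord.Nodup ∧ (∀ c, c ∈ ord ↔ c ∈ cords X \ L) ∧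
  ∀ i (h : i < ord.length), HasPivots T L (ord.take i) (ord.get ⟨i, h⟩)

/-- `L` is a shellable lasso for `T`: `L ⊆ cords X`, every element of `X` occurs in some
cord of `L`, and `cords X - L` admits a shellable ordering. -/
def IsShellableLasso (T : XTree α X) (L : Set (Sym2 α)) : Prop :=
  L ⊆ cords X ∧ (∀ a ∈ X, ∃ c ∈ L, a ∈ c) ∧ ∃ ord, IsShellableOrdering T L ord

/-- The graph `(Xs, L)` is a 2d-tree. -/
def Is2dTree (Xs : Set α) (L : Set (Sym2 α)) : Prop :=
  ∃ ord : List α, ord.Nodup ∧ (∀ a, a ∈ ord ↔ a ∈ Xs) ∧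
    ∃ h2 : 2 ≤ ord.length,
      s(ord.get ⟨0, by omega⟩, ord.get ⟨1, by omega⟩) ∈ L ∧
      ∀ i (h : i < ord.length), 2 ≤ i →
        {b | b ∈ ord.take i ∧ s(ord.get ⟨i, h⟩, b) ∈ L}.ncard = 2

/-- Leaves `x` and `y` form a cherry of `T`. -/
def IsCherry (T : XTree α X) (x y : α) : Prop :=
  x ≠ y ∧ x ∈ X ∧ y ∈ X ∧ ∃ v : T.V, T.tree.Adj (T.ι x) v ∧ T.tree.Adj (T.ι y) v

/-- `T'` is (equivalent to) the restriction `T|Y` of `T` to `Y ⊆ X`, characterized by the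
fact that the clusters of `T|Y` are exactly the nonempty proper restrictions to `Y`
of clusters of `T`. -/
def IsRestrictionOf {Y : Set α} (T' : XTree α Y) (T : XTree α X) : Prop :=
  Y ⊆ X ∧ clus T' = {A | (∃ B ∈ clus T, A = B ∩ Y) ∧ A.Nonempty ∧ A ≠ Y}

open Classical in
/-- One application of the extension rule (R), acting on a state consisting of
the current set of cords together with the current distance values. -/
def RStep (Xs : Set α) (S S' : Set (Sym2 α) × (Sym2 α → ℝ)) : Prop :=
  ∃ x y u z : α, x ∈ Xs ∧ y ∈ Xs ∧ u ∈ Xs ∧ z ∈ Xs ∧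
    List.Pairwise (· ≠ ·) [x, y, u, z] ∧
    s(x, y) ∈ S.1 ∧ s(y, u) ∈ S.1 ∧ s(y, z) ∈ S.1 ∧ s(x, u) ∈ S.1 ∧ s(u, z) ∈ S.1 ∧
    s(x, z) ∉ S.1 ∧
    S.2 s(x, y) + S.2 s(u, z) < S.2 s(x, u) + S.2 s(y, z) ∧
    S'.1 = insert s(x, z) S.1 ∧
    S'.2 = Function.update S.2 s(x, z) (S.2 s(x, u) + S.2 s(y, z) - S.2 s(y, u))

/-- `S` is the result `cl_R(L)` (with its `d`-values) of exhaustively applying rule (R)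
starting from `L` with initial distance values `d`. -/
def IsRClosureOf (Xs : Set α) (L : Set (Sym2 α)) (d : Sym2 α → ℝ)
    (S : Set (Sym2 α) × (Sym2 α → ℝ)) : Prop :=
  Relation.ReflTransGen (RStep Xs) (L, d) S ∧ ∀ S', ¬ RStep Xs S S'

end XTree

namespace XTree

noncomputable instance (T : XTree α X) : Fintype T.V := T.fintypeV

noncomputable instance (T : XTree α X) : DecidableEq T.V := Classical.decEq _

variable {α : Type} {X : Set α} {T : XTree α X}

section Foundation

/-- Reachability avoiding a vertex. -/
def Reach (T : XTree α X) (v w u : T.V) : Prop := ∃ p : T.tree.Walk w u, v ∉ p.support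

lemma path_unique {u v : T.V} (p : T.tree.Walk u v) (hp : p.IsPath) : p = T.treePath u v :=
  ((T.isTree.existsUnique_path u v).unique hp (T.treePath_isPath u v))

lemma reach_iff {v w u : T.V} : T.Reach v w u ↔ v ∉ (T.treePath w u).support := by
  classical
  constructor
  · rintro ⟨p, hp⟩ hv
    exact hp (p.support_bypass_subset (by rw [path_unique p.bypass p.bypass_isPath]; exact hv))
  · intro h; exact ⟨_, h⟩

lemma Reach.ne_left {v w u : T.V} (h : T.Reach v w u) : w ≠ v := by
  rintro rfl; exact h.choose_spec h.choose.start_mem_support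

lemma Reach.ne_right {v w u : T.V} (h : T.Reach v w u) : u ≠ v := by
  rintro rfl; exact h.choose_spec h.choose.end_mem_support

lemma reach_refl {v w : T.V} (h : w ≠ v) : T.Reach v w w :=
  ⟨SimpleGraph.Walk.nil, by simp [h.symm]⟩

lemma Reach.symm {v w u : T.V} (h : T.Reach v w u) : T.Reach v u w := by
  obtain ⟨p, hp⟩ := h
  exact ⟨p.reverse, by simpa using hp⟩

lemma Reach.trans {v w u z : T.V} (h : T.Reach v w u) (h' : T.Reach v u z) : T.Reach v w z := by
  obtain ⟨p, hp⟩ := h; obtain ⟨q, hq⟩ := h'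
  exact ⟨p.append q, by rw [SimpleGraph.Walk.mem_support_append_iff]; tauto⟩

lemma reach_adj {v w u : T.V} (h : T.tree.Adj w u) (h1 : w ≠ v) (h2 : u ≠ v) :
    T.Reach v w u :=
  ⟨SimpleGraph.Walk.cons h SimpleGraph.Walk.nil, by
    simp [SimpleGraph.Walk.support_cons, h1.symm, h2.symm]⟩

lemma Reach.extend {v w u u' : T.V} (h : T.Reach v w u) (ha : T.tree.Adj u u') (h2 : u' ≠ v) :
    T.Reach v w u' :=
  h.trans (reach_adj ha h.ne_right h2)

/-- The two-edge path through the middle vertex. -/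
lemma treePath_two {v u₁ u₂ : T.V} (h1 : T.tree.Adj v u₁) (h2 : T.tree.Adj v u₂)
    (hne : u₁ ≠ u₂) :
    T.treePath u₁ u₂ = SimpleGraph.Walk.cons h1.symm (SimpleGraph.Walk.cons h2 SimpleGraph.Walk.nil) := by
  refine (path_unique _ ?_).symm
  rw [SimpleGraph.Walk.isPath_def]
  simp [SimpleGraph.Walk.support_cons, h1.ne', h2.ne, hne]

lemma not_reach_adj {v u₁ u₂ : T.V} (h1 : T.tree.Adj v u₁) (h2 : T.tree.Adj v u₂)
    (hne : u₁ ≠ u₂) : ¬ T.Reach v u₁ u₂ := by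
  rw [reach_iff, treePath_two h1 h2 hne]
  simp [SimpleGraph.Walk.support_cons]

lemma reach_dir {v w : T.V} (h : w ≠ v) : ∃ u, T.tree.Adj v u ∧ T.Reach v w u := by
  have hp := T.treePath_isPath v w
  set p := T.treePath v w with hp'
  clear_value p
  cases p with
  | nil => exact absurd rfl h.symm
  | cons ha q =>
    rw [SimpleGraph.Walk.cons_isPath_iff] at hp
    exact ⟨_, ha, ⟨q.reverse, by simpa using hp.2⟩⟩

lemma dir_unique {v w u₁ u₂ : T.V} (h1 : T.tree.Adj v u₁) (h2 : T.tree.Adj v u₂)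
    (r1 : T.Reach v w u₁) (r2 : T.Reach v w u₂) : u₁ = u₂ := by
  by_contra hne
  exact not_reach_adj h1 h2 hne (r1.symm.trans r2)

end Foundation

end XTree
namespace XTree

variable {α : Type} {X : Set α} {T : XTree α X}

section Degree

lemma interior_of_two_nbrs {v a b : T.V} (ha : T.tree.Adj v a) (hb : T.tree.Adj v b)
    (hne : a ≠ b) : T.IsInterior v := by
  intro hv
  have h1 := (T.leaf_iff v).2 hv
  have hsub : ({a, b} : Set T.V) ⊆ T.tree.neighborSet v := by
    rintro x (rfl | rfl) <;> assumption
  have := Set.ncard_le_ncard hsub (Set.toFinite _)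
  rw [Set.ncard_pair hne, h1] at this
  omega

lemma interior_nbrs (hT : T.IsFullyResolved) {v : T.V} (hv : T.IsInterior v) :
    ∃ a b c : T.V, a ≠ b ∧ a ≠ c ∧ b ≠ c ∧ T.tree.neighborSet v = {a, b, c} := by
  have := hT v hv
  rw [Set.ncard_eq_three] at this
  exact this

lemma leaf_of_mem (a : α) (ha : a ∈ X) : (T.tree.neighborSet (T.ι a)).ncard = 1 :=
  (T.leaf_iff _).2 ⟨a, ha, rfl⟩

lemma ι_ne_interior {v : T.V} (hv : T.IsInterior v) {a : α} (ha : a ∈ X) : T.ι a ≠ v := by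
  rintro rfl; exact hv ⟨a, ha, rfl⟩

/-- the neighbor of a leaf -/
lemma leaf_nbr (a : α) (ha : a ∈ X) :
    ∃ v : T.V, T.tree.neighborSet (T.ι a) = {v} := by
  have := leaf_of_mem (T := T) a ha
  rwa [Set.ncard_eq_one] at this

/-- With `|X| ≥ 3`, the neighbor of a leaf is interior. -/
lemma leaf_nbr_interior (hcard : 3 ≤ X.ncard) (hfin : X.Finite) {a : α} (ha : a ∈ X)
    {v : T.V} (hv : T.tree.neighborSet (T.ι a) = {v}) : T.IsInterior v := by
  intro hvleaf
  have h1 : (T.tree.neighborSet v).ncard = 1 := (T.leaf_iff v).2 hvleaf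
  rw [Set.ncard_eq_one] at h1
  obtain ⟨z, hz⟩ := h1
  have hadj : T.tree.Adj (T.ι a) v := by
    have : v ∈ T.tree.neighborSet (T.ι a) := by rw [hv]; rfl
    exact this
  have hzA : z = T.ι a := by
    have : T.ι a ∈ T.tree.neighborSet v := hadj.symm
    rw [hz] at this; exact this.symm
  subst hzA
  -- every vertex is ι a or v
  have hall : ∀ u : T.V, u = T.ι a ∨ u = v := by
    intro u
    have hp := T.treePath_isPath v u
    set p := T.treePath v u with hp'
    clear_value p
    cases p with
    | nil => exact Or.inr rfl
    | cons h q =>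
      rename_i w
      have hfirst : w = T.ι a := by
        have : w ∈ T.tree.neighborSet v := h
        rw [hz] at this; exact this
      subst hfirst
      cases q with
      | nil => exact Or.inl rfl
      | cons h' q' =>
        rename_i w'
        exfalso
        have hsecond : w' = v := by
          have : w' ∈ T.tree.neighborSet (T.ι a) := h'
          rw [hv] at this; exact this
        subst hsecond
        rw [SimpleGraph.Walk.cons_isPath_iff] at hp
        exact hp.2 (by simpa using SimpleGraph.Walk.start_mem_support q')
  have : X.ncard ≤ 2 := by
    have himg : T.ι '' X ⊆ {T.ι a, v} := by rintro _ ⟨x, _, rfl⟩; simpa using hall (T.ι x)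
    calc X.ncard = (T.ι '' X).ncard := (Set.ncard_image_of_injOn T.ι_injOn).symm
    _ ≤ ({T.ι a, v} : Set T.V).ncard := Set.ncard_le_ncard himg (Set.toFinite _)
    _ ≤ 2 := Set.ncard_insert_le _ _ |>.trans (by simp)
  omega

end Degree

section CompSet

lemma mem_compSet {v u : T.V} {a : α} :
    a ∈ T.compSet v u ↔ a ∈ X ∧ T.Reach v (T.ι a) u := Iff.rfl

lemma compSet_subset_X {v u : T.V} : T.compSet v u ⊆ X := fun _ h => h.1

lemma compSet_disjoint {v u₁ u₂ : T.V} (h1 : T.tree.Adj v u₁) (h2 : T.tree.Adj v u₂)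
    (hne : u₁ ≠ u₂) {a : α} (ha1 : a ∈ T.compSet v u₁) (ha2 : a ∈ T.compSet v u₂) : False :=
  not_reach_adj h1 h2 hne (Reach.trans (Reach.symm ha1.2) ha2.2)

lemma mem_compSet_dir {v : T.V} (hv : T.IsInterior v) {a : α} (ha : a ∈ X) :
    ∃ u, T.tree.Adj v u ∧ a ∈ T.compSet v u := by
  obtain ⟨u, hu, hr⟩ := reach_dir (ι_ne_interior hv ha)
  exact ⟨u, hu, ha, hr⟩

lemma compSet_mono {v u v' u' : T.V} (h1 : ¬ T.Reach v' v u') (h2 : T.Reach v u' u) :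
    T.compSet v' u' ⊆ T.compSet v u := by
  classical
  rintro a ⟨ha, p, hp⟩
  refine ⟨ha, ?_⟩
  have hv : v ∉ p.support := by
    intro hmem
    exact h1 ⟨p.dropUntil v hmem, fun hc => hp (p.support_dropUntil_subset hmem hc)⟩
  exact Reach.trans ⟨p, hv⟩ h2

end CompSet

end XTree
namespace XTree

variable {α : Type} {X : Set α} {T : XTree α X}

section Clus

lemma treePath_single {v u : T.V} (h : T.tree.Adj v u) :
    T.treePath v u = SimpleGraph.Walk.cons h SimpleGraph.Walk.nil := by
  refine (path_unique _ ?_).symm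
  rw [SimpleGraph.Walk.isPath_def]
  simp [h.ne]

lemma compSet_eq_sideSet {v u : T.V} (h : T.tree.Adj v u) :
    T.compSet v u = T.sideSet s(v, u) u := by
  classical
  ext a
  constructor
  · rintro ⟨ha, p, hp⟩
    refine ⟨ha, ?_⟩
    have hedges : ∀ e ∈ p.edges, e ∈ (T.tree.deleteEdges {s(v,u)}).edgeSet := by
      intro e he
      rw [SimpleGraph.edgeSet_deleteEdges]
      refine ⟨p.edges_subset_edgeSet he, ?_⟩
      rintro rfl
      exact hp (p.fst_mem_support_of_mem_edges he)
    exact ⟨p.transfer _ hedges⟩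
  · rintro ⟨ha, ⟨q⟩⟩
    refine ⟨ha, ?_⟩
    have hqe : ∀ e ∈ q.edges, e ∈ T.tree.edgeSet := by
      intro e he
      have := q.edges_subset_edgeSet he
      rw [SimpleGraph.edgeSet_deleteEdges] at this
      exact this.1
    set q' : T.tree.Walk (T.ι a) u := q.transfer T.tree hqe with hq'
    have hq'e : s(v,u) ∉ q'.edges := by
      rw [hq', SimpleGraph.Walk.edges_transfer]
      intro hc
      have := q.edges_subset_edgeSet hc
      rw [SimpleGraph.edgeSet_deleteEdges] at this
      exact this.2 rfl
    set pb := q'.bypass with hpb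
    refine ⟨pb, ?_⟩
    intro hv
    have hpath : pb.IsPath := q'.bypass_isPath
    have hdrop : (pb.dropUntil v hv).IsPath := hpath.dropUntil hv
    have : pb.dropUntil v hv = T.treePath v u := path_unique _ hdrop
    have hedge : s(v,u) ∈ (pb.dropUntil v hv).edges := by
      rw [this, treePath_single h]
      simp
    have : s(v,u) ∈ q'.edges :=
      q'.edges_bypass_subset (pb.edges_dropUntil_subset hv hedge)
    exact hq'e this

lemma compSet_mem_clus {v u : T.V} (h : T.tree.Adj v u) : T.compSet v u ∈ clus T :=
  ⟨s(v,u), h, u, by simp, compSet_eq_sideSet h⟩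

end Clus

section Stability

variable {f : Set α → α}

lemma fmem (hf : IsStableTransversal (clus T) f) {v u : T.V} (h : T.tree.Adj v u) :
    f (T.compSet v u) ∈ T.compSet v u :=
  hf.1 _ (compSet_mem_clus h)

lemma fstab (hf : IsStableTransversal (clus T) f) {v u v' u' : T.V}
    (h : T.tree.Adj v u) (h' : T.tree.Adj v' u')
    (hmem : f (T.compSet v u) ∈ T.compSet v' u') (hsub : T.compSet v' u' ⊆ T.compSet v u) :
    f (T.compSet v u) = f (T.compSet v' u') :=
  hf.2 _ (compSet_mem_clus h) _ (compSet_mem_clus h') hmem hsub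

lemma cord_mem_L {v u₁ u₂ : T.V} (hv : T.IsInterior v) (h1 : T.tree.Adj v u₁)
    (h2 : T.tree.Adj v u₂) (hne : u₁ ≠ u₂) :
    s(f (T.compSet v u₁), f (T.compSet v u₂)) ∈ tripletCoverOf T f :=
  ⟨v, u₁, u₂, hv, h1, h2, hne, rfl⟩

end Stability

end XTree
namespace XTree

variable {α : Type} {X : Set α} {T : XTree α X}

section Geometry

lemma reach_asymm {v w z : T.V} (h : T.tree.Adj v w) (h1 : T.Reach w z v)
    (h2 : T.Reach v z w) : False := by
  rw [reach_iff] at h1 h2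
  have hpp : (SimpleGraph.Walk.cons h.symm ((T.treePath z v).reverse)).IsPath := by
    rw [SimpleGraph.Walk.cons_isPath_iff]
    refine ⟨(T.treePath_isPath z v).reverse, ?_⟩
    simpa using h1
  have heq := path_unique _ hpp
  have hv : v ∈ (T.treePath w z).support := by
    rw [← heq, SimpleGraph.Walk.support_cons]
    exact List.mem_cons_of_mem _ (SimpleGraph.Walk.start_mem_support _)
  rw [treePath_symm] at hv
  apply h2
  simpa using hv

lemma compSet_split {v w u₁ u₂ : T.V} (hnb : T.tree.neighborSet v = {w, u₁, u₂})
    (hw1 : w ≠ u₁) (hw2 : w ≠ u₂) (h12 : u₁ ≠ u₂) :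
    T.compSet w v = T.compSet v u₁ ∪ T.compSet v u₂ := by
  have haw : T.tree.Adj v w := by rw [← SimpleGraph.mem_neighborSet, hnb]; simp
  have ha1 : T.tree.Adj v u₁ := by rw [← SimpleGraph.mem_neighborSet, hnb]; simp
  have ha2 : T.tree.Adj v u₂ := by rw [← SimpleGraph.mem_neighborSet, hnb]; simp
  ext a
  constructor
  · rintro ⟨ha, hr⟩
    have hav : T.ι a ≠ v :=
      ι_ne_interior (interior_of_two_nbrs ha1 ha2 h12) ha
    obtain ⟨u, hu, hdir⟩ := reach_dir (T := T) hav
    have hu' : u ∈ ({w, u₁, u₂} : Set T.V) := by rw [← hnb]; exact hu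
    rcases hu' with h | h | h
    · exact (reach_asymm haw (show T.Reach w (T.ι a) v from hr) (h ▸ hdir)).elim
    · exact Or.inl ⟨ha, h ▸ hdir⟩
    · exact Or.inr ⟨ha, h ▸ hdir⟩
  · rintro (⟨ha, p, hp⟩ | ⟨ha, p, hp⟩)
    · refine ⟨ha, ?_⟩
      have hwp : w ∉ p.support := by
        intro hc
        classical
        exact not_reach_adj haw ha1 hw1
          ⟨p.dropUntil w hc, fun hv => hp (p.support_dropUntil_subset hc hv)⟩
      exact (show T.Reach w (T.ι a) u₁ from ⟨p, hwp⟩).extend ha1.symm haw.ne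
    · refine ⟨ha, ?_⟩
      have hwp : w ∉ p.support := by
        intro hc
        classical
        exact not_reach_adj haw ha2 hw2
          ⟨p.dropUntil w hc, fun hv => hp (p.support_dropUntil_subset hc hv)⟩
      exact (show T.Reach w (T.ι a) u₂ from ⟨p, hwp⟩).extend ha2.symm haw.ne

/-- Components at `v` pointing away from the direction `n` of `t` are contained in
the component at `t` containing them, given a common witness. -/
lemma side_mono {v t n uk m : T.V} (hvt : t ≠ v) (hn : T.tree.Adj v n)
    (hrt : T.Reach v t n) (hk : T.tree.Adj v uk) (hkn : uk ≠ n) (hm : T.tree.Adj t m)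
    {y : α} (hy1 : y ∈ T.compSet v uk) (hy2 : y ∈ T.compSet t m)
    {u' : T.V} (hu' : T.tree.Adj v u') (hu'n : u' ≠ n) :
    T.compSet v u' ⊆ T.compSet t m := by
  classical
  have hne_t : ∀ {z : T.V}, T.tree.Adj v z → z ≠ n → z ≠ t := by
    intro z hz hzn hc
    exact hzn (dir_unique hz hn (by rw [hc] at hz ⊢; exact reach_refl hz.ne') (hc ▸ hrt))
  have hnr : ∀ {z : T.V}, T.tree.Adj v z → z ≠ n → ¬ T.Reach v t z := by
    intro z hz hzn hc
    exact hzn ((dir_unique hz hn hc hrt))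
  -- Reach t uk m
  obtain ⟨p, hp⟩ := hy1.2
  have htp : t ∉ p.support := by
    intro hc
    exact hnr hk hkn ⟨p.dropUntil t hc, fun hv => hp (p.support_dropUntil_subset hc hv)⟩
  have hr1 : T.Reach t uk m := (Reach.symm ⟨p, htp⟩).trans hy2.2
  have hr2 : T.Reach t u' m := by
    by_cases hu : u' = uk
    · exact hu ▸ hr1
    · exact ((reach_adj hu'.symm (hne_t hu' hu'n) (Ne.symm hvt)).extend hk (hne_t hk hkn)).trans hr1
  exact compSet_mono (hnr hu' hu'n) hr2

end Geometry

end XTree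
namespace XTree

variable {α : Type} {X : Set α} {T : XTree α X}

section StepFacts

lemma ne_dir {v t n z : T.V} (htv : t ≠ v) (hn : T.tree.Adj v n) (hrt : T.Reach v t n)
    (hz : T.tree.Adj v z) (hzn : z ≠ n) : z ≠ t ∧ ¬ T.Reach v t z := by
  constructor
  · rintro rfl
    exact hzn (dir_unique hz hn (reach_refl hz.ne') hrt)
  · intro hr
    exact hzn (dir_unique hz hn hr hrt)

variable {f : Set α → α} (hf : IsStableTransversal (clus T) f)
variable {v w uo un : T.V} (hnb : T.tree.neighborSet v = {w, uo, un})
  (hw1 : w ≠ uo) (hw2 : w ≠ un) (h12 : uo ≠ un)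
variable {S : Finset T.V}
  (hSint : ∀ p ∈ S, T.IsInterior p)
  (hSconn : ∀ p ∈ S, ∀ q ∈ S, ∃ pw : T.tree.Walk p q, ∀ z ∈ pw.support, z ∈ (S : Set T.V))
  (hvS : v ∉ S) (hwS : w ∈ S)

section Core

include hnb

lemma nadj₁ : T.tree.Adj v w := by rw [← SimpleGraph.mem_neighborSet, hnb]; simp
lemma nadj₂ : T.tree.Adj v uo := by rw [← SimpleGraph.mem_neighborSet, hnb]; simp
lemma nadj₃ : T.tree.Adj v un := by rw [← SimpleGraph.mem_neighborSet, hnb]; simp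

include h12 in
lemma v_interior : T.IsInterior v :=
  interior_of_two_nbrs (nadj₂ hnb) (nadj₃ hnb) h12

include hSconn hvS hwS in
lemma reach_S {p : T.V} (hp : p ∈ S) : T.Reach v p w := by
  obtain ⟨pw, hpw⟩ := hSconn p hp w hwS
  exact ⟨pw, fun hc => hvS (hpw _ hc)⟩

include hSconn hvS hwS in
lemma not_reach_S {p : T.V} (hp : p ∈ S) {z : T.V} (hz : T.tree.Adj v z) (hzw : z ≠ w) :
    ¬ T.Reach v p z := fun hr =>
  not_reach_adj (nadj₁ hnb) hz (Ne.symm hzw)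
    ((Reach.symm (reach_S hnb hSconn hvS hwS hp)).trans hr)

include hf hw1 hw2 h12 hSconn hvS hwS in
/-- Any old component whose `f`-value lies in `E = compSet w v` has value `f E`. -/
lemma old_in_E {p : T.V} (hp : p ∈ S) {c : T.V} (hc : T.tree.Adj p c)
    (hmem : f (T.compSet p c) ∈ T.compSet w v) :
    f (T.compSet p c) = f (T.compSet w v) := by
  have haw := nadj₁ hnb; have hao := nadj₂ hnb; have han := nadj₃ hnb
  have hsplit := compSet_split hnb hw1 hw2 h12
  have hpv : p ≠ v := fun hc' => hvS (hc' ▸ hp)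
  have hyF : f (T.compSet p c) ∈ T.compSet p c := fmem hf hc
  have hmono : ∀ u', T.tree.Adj v u' → u' ≠ w → T.compSet v u' ⊆ T.compSet p c := by
    have hmem' := hsplit ▸ hmem
    rcases hmem' with hyk | hyk
    · exact fun u' hu' hu'w => side_mono hpv haw (reach_S hnb hSconn hvS hwS hp)
        hao (Ne.symm hw1) hc hyk hyF hu' hu'w
    · exact fun u' hu' hu'w => side_mono hpv haw (reach_S hnb hSconn hvS hwS hp)
        han (Ne.symm hw2) hc hyk hyF hu' hu'w
  have hEsub : T.compSet w v ⊆ T.compSet p c := by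
    rw [hsplit]
    exact Set.union_subset (hmono uo hao (Ne.symm hw1)) (hmono un han (Ne.symm hw2))
  exact fstab hf hc haw.symm hmem hEsub

variable (hold : f (T.compSet w v) ∈ T.compSet v uo)

include hf hw1 hw2 h12 hold

lemma fE_eq : f (T.compSet w v) = f (T.compSet v uo) := by
  have haw := nadj₁ hnb
  refine fstab hf haw.symm (nadj₂ hnb) hold ?_
  rw [compSet_split hnb hw1 hw2 h12]
  exact Set.subset_union_left

include hSconn hvS hwS in
lemma new_notin {p : T.V} (hp : p ∈ S) {c : T.V} (hc : T.tree.Adj p c) :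
    f (T.compSet p c) ≠ f (T.compSet v un) := by
  intro heq
  have h1 : f (T.compSet p c) ∈ T.compSet w v := by
    rw [compSet_split hnb hw1 hw2 h12, heq]
    exact Or.inr (fmem hf (nadj₃ hnb))
  have h2 := old_in_E hf hnb hw1 hw2 h12 hSconn hvS hwS hp hc h1
  have h3 := fE_eq hf hnb hw1 hw2 h12 hold
  have h4 : f (T.compSet v un) ∈ T.compSet v uo := by
    rw [← heq, h2, h3]; exact fmem hf (nadj₂ hnb)
  exact compSet_disjoint (nadj₂ hnb) (nadj₃ hnb) h12 h4 (fmem hf (nadj₃ hnb))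

include hSint hwS in
lemma fD_old : ∃ c, T.tree.Adj w c ∧ c ≠ v ∧ f (T.compSet v w) = f (T.compSet w c) := by
  have haw := nadj₁ hnb
  have hwint : T.IsInterior w := hSint w hwS
  have hfD : f (T.compSet v w) ∈ T.compSet v w := fmem hf haw
  obtain ⟨c, hc, hmem⟩ := mem_compSet_dir hwint hfD.1
  have hcv : c ≠ v := by
    rintro rfl
    rw [compSet_split hnb hw1 hw2 h12] at hmem
    rcases hmem with h | h
    · exact compSet_disjoint haw (nadj₂ hnb) hw1 hfD h
    · exact compSet_disjoint haw (nadj₃ hnb) hw2 hfD h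
  refine ⟨c, hc, hcv, ?_⟩
  refine fstab hf haw hc hmem (compSet_mono ?_ ?_)
  · exact not_reach_adj haw.symm hc (Ne.symm hcv)
  · exact reach_adj hc.symm hcv haw.ne'

include hSint hSconn hvS hwS in
/-- Characterization of old cord-partners of the new label. -/
lemma partner_char {t m m' : T.V} (hm : T.tree.Adj t m) (hm' : T.tree.Adj t m')
    (hmm' : m ≠ m')
    (hfG : f (T.compSet t m) = f (T.compSet v un))
    (hbold : ∃ p ∈ S, ∃ c, T.tree.Adj p c ∧ f (T.compSet t m') = f (T.compSet p c)) :
    f (T.compSet t m') = f (T.compSet v uo) ∨ f (T.compSet t m') = f (T.compSet v w) := by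
  classical
  have haw := nadj₁ hnb; have hao := nadj₂ hnb; have han := nadj₃ hnb
  have hvint := v_interior hnb h12
  have hsplit := compSet_split hnb hw1 hw2 h12
  have hxBn : f (T.compSet v un) ∈ T.compSet v un := fmem hf han
  have hxG : f (T.compSet v un) ∈ T.compSet t m := hfG ▸ fmem hf hm
  have hbG' : f (T.compSet t m') ∈ T.compSet t m' := fmem hf hm'
  obtain ⟨u'', hu'', hbu⟩ := mem_compSet_dir hvint hbG'.1
  have hu''mem : u'' ∈ ({w, uo, un} : Set T.V) := hnb ▸ hu''
  -- helper: the value of `compSet t m'` cannot be old and lie in `compSet v un`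
  have hnotBn : f (T.compSet t m') ∈ T.compSet v un → False := by
    intro hbBn
    obtain ⟨p, hp, c, hc, hb⟩ := hbold
    have hmemE : f (T.compSet p c) ∈ T.compSet w v := by
      rw [hsplit, ← hb]; exact Or.inr hbBn
    have h2 := old_in_E hf hnb hw1 hw2 h12 hSconn hvS hwS hp hc hmemE
    have h3 := fE_eq hf hnb hw1 hw2 h12 hold
    have hbBo : f (T.compSet t m') ∈ T.compSet v uo := by
      rw [hb, h2, h3]; exact fmem hf hao
    exact compSet_disjoint hao han h12 hbBo hbBn
  have hBo_case : f (T.compSet t m') ∈ T.compSet v uo → f (T.compSet t m') = f (T.compSet v uo) := by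
    intro hbBo
    obtain ⟨p, hp, c, hc, hb⟩ := hbold
    have hmemE : f (T.compSet p c) ∈ T.compSet w v := by
      rw [hsplit, ← hb]; exact Or.inl hbBo
    have h2 := old_in_E hf hnb hw1 hw2 h12 hSconn hvS hwS hp hc hmemE
    have h3 := fE_eq hf hnb hw1 hw2 h12 hold
    rw [hb, h2, h3]
  by_cases htv : t = v
  · subst htv
    have hm_mem : m ∈ ({w, uo, un} : Set T.V) := hnb ▸ hm
    rcases hm_mem with h | h | h
    · rw [h] at hxG
      exact (compSet_disjoint haw han hw2 hxG hxBn).elim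
    · rw [h] at hxG
      exact (compSet_disjoint hao han h12 hxG hxBn).elim
    · have hm'_mem : m' ∈ ({w, uo, un} : Set T.V) := hnb ▸ hm'
      rcases hm'_mem with h' | h' | h'
      · exact Or.inr (by rw [h'])
      · exact Or.inl (by rw [h'])
      · exact absurd (h.trans h'.symm) hmm'
  · obtain ⟨n, hn, hrt⟩ := reach_dir htv
    have hnmem : n ∈ ({w, uo, un} : Set T.V) := hnb ▸ hn
    rcases hnmem with h | h | h
    · rw [h] at hn hrt
      -- t on the w-side: contradiction
      exfalso
      have hmono := fun u' hu' hu'n => side_mono htv hn hrt han (Ne.symm hw2) hm hxBn hxG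
        (u' := u') hu' hu'n
      have hEsub : T.compSet w v ⊆ T.compSet t m := by
        rw [hsplit]
        exact Set.union_subset (hmono uo hao (Ne.symm hw1)) (hmono un han (Ne.symm hw2))
      have h1 : f (T.compSet t m) = f (T.compSet w v) := by
        refine fstab hf hm haw.symm ?_ hEsub
        rw [hsplit]; exact Or.inr (hfG ▸ hxBn)
      have h2 : f (T.compSet t m) ∈ T.compSet v uo := h1 ▸ hold
      exact compSet_disjoint hao han h12 h2 (hfG ▸ hxBn)
    · rw [h] at hn hrt
      -- t on the uo-side
      have hmono := fun u' hu' hu'n => side_mono htv hn hrt han h12.symm hm hxBn hxG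
        (u' := u') hu' hu'n
      have hBnG : T.compSet v un ⊆ T.compSet t m := hmono un han h12.symm
      have hDG : T.compSet v w ⊆ T.compSet t m := hmono w haw hw1
      rcases hu''mem with h' | h' | h'
      · rw [h'] at hbu
        exact (compSet_disjoint hm hm' hmm' (hDG hbu) hbG').elim
      · rw [h'] at hbu
        exact Or.inl (hBo_case hbu)
      · rw [h'] at hbu
        exact (compSet_disjoint hm hm' hmm' (hBnG hbu) hbG').elim
    · rw [h] at hn hrt
      -- t on the un-side
      by_cases hrv : T.Reach t v m'
      · have hwt := ne_dir htv hn hrt haw hw2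
        have hot := ne_dir htv hn hrt hao h12
        have hDG' : T.compSet v w ⊆ T.compSet t m' :=
          compSet_mono hwt.2 ((reach_adj haw.symm hwt.1 (Ne.symm htv)).trans hrv)
        have hBoG' : T.compSet v uo ⊆ T.compSet t m' :=
          compSet_mono hot.2 ((reach_adj hao.symm hot.1 (Ne.symm htv)).trans hrv)
        rcases hu''mem with h' | h' | h'
        · rw [h'] at hbu
          exact Or.inr (fstab hf hm' haw hbu hDG')
        · rw [h'] at hbu
          exact Or.inl (fstab hf hm' hao hbu hBoG')
        · rw [h'] at hbu
          exact (hnotBn hbu).elim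
      · exfalso
        apply hnotBn
        have hsub : T.compSet t m' ⊆ T.compSet v un := by
          rintro a ⟨ha, p, hp⟩
          have hvp : v ∉ p.support := fun hc =>
            hrv ⟨p.dropUntil v hc, fun hz => hp (p.support_dropUntil_subset hc hz)⟩
          refine ⟨ha, Reach.trans ⟨p, hvp⟩ ?_⟩
          have hm'v : m' ≠ v := by
            rintro rfl
            exact hrv (reach_refl (Ne.symm htv))
          exact (reach_adj hm'.symm hm'v htv).trans hrt
        exact hsub hbG'

end Core

end StepFacts

end XTree
namespace XTree

variable {α : Type} {X : Set α} {T : XTree α X}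

section Induction

variable {f : Set α → α}

/-- The labels available from processed vertices. -/
def OldL (T : XTree α X) (f : Set α → α) (S : Finset T.V) : Set α :=
  {x | ∃ v ∈ S, ∃ u, T.tree.Adj v u ∧ x = f (T.compSet v u)}

/-- The induction invariant. -/
def Inv (T : XTree α X) (f : Set α → α) (S : Finset T.V) (ord : List α) : Prop :=
  S.Nonempty ∧ (∀ p ∈ S, T.IsInterior p) ∧
  (∀ p ∈ S, ∀ q ∈ S, ∃ pw : T.tree.Walk p q, ∀ z ∈ pw.support, z ∈ (S : Set T.V)) ∧
  ord.Nodup ∧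
  (∀ x, x ∈ ord ↔ x ∈ OldL T f S) ∧
  ∃ h2 : 2 ≤ ord.length,
    s(ord.get ⟨0, by omega⟩, ord.get ⟨1, by omega⟩) ∈ tripletCoverOf T f ∧
    ∀ i (h : i < ord.length), 2 ≤ i →
      {b | b ∈ ord.take i ∧ s(ord.get ⟨i, h⟩, b) ∈ tripletCoverOf T f}.ncard = 2

lemma base (hf : IsStableTransversal (clus T) f) {v₁ a b c : T.V} (hv₁ : T.IsInterior v₁)
    (hnb : T.tree.neighborSet v₁ = {a, b, c}) (hab : a ≠ b) (hac : a ≠ c) (hbc : b ≠ c) :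
    Inv T f {v₁} [f (T.compSet v₁ a), f (T.compSet v₁ b), f (T.compSet v₁ c)] := by
  have haa : T.tree.Adj v₁ a := by rw [← SimpleGraph.mem_neighborSet, hnb]; simp
  have hba : T.tree.Adj v₁ b := by rw [← SimpleGraph.mem_neighborSet, hnb]; simp
  have hca : T.tree.Adj v₁ c := by rw [← SimpleGraph.mem_neighborSet, hnb]; simp
  have hfa := fmem hf haa
  have hfb := fmem hf hba
  have hfc := fmem hf hca
  have hab' : f (T.compSet v₁ a) ≠ f (T.compSet v₁ b) := by
    intro h; rw [← h] at hfb; exact compSet_disjoint haa hba hab hfa hfb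
  have hac' : f (T.compSet v₁ a) ≠ f (T.compSet v₁ c) := by
    intro h; rw [← h] at hfc; exact compSet_disjoint haa hca hac hfa hfc
  have hbc' : f (T.compSet v₁ b) ≠ f (T.compSet v₁ c) := by
    intro h; rw [← h] at hfc; exact compSet_disjoint hba hca hbc hfb hfc
  refine ⟨Finset.singleton_nonempty _, ?_, ?_, ?_, ?_, ?_⟩
  · intro p hp; rw [Finset.mem_singleton] at hp; exact hp ▸ hv₁
  · intro p hp q hq
    rw [Finset.mem_singleton] at hp hq
    subst hp; subst hq
    exact ⟨SimpleGraph.Walk.nil, by simp⟩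
  · simp [List.nodup_cons, hab', hac', hbc']
  · intro x
    constructor
    · intro hx
      simp only [List.mem_cons, List.not_mem_nil, or_false] at hx
      rcases hx with rfl | rfl | rfl
      · exact ⟨v₁, by simp, a, haa, rfl⟩
      · exact ⟨v₁, by simp, b, hba, rfl⟩
      · exact ⟨v₁, by simp, c, hca, rfl⟩
    · rintro ⟨p, hp, u, hu, rfl⟩
      rw [Finset.mem_singleton] at hp
      subst hp
      have : u ∈ ({a, b, c} : Set T.V) := hnb ▸ hu
      rcases this with h | h | h <;> rw [h] <;> simp
  · refine ⟨by simp, ?_, ?_⟩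
    · exact cord_mem_L hv₁ haa hba hab
    · intro i h h2
      have : i = 2 := by simp at h; omega
      subst this
      have hset : {x | x ∈ [f (T.compSet v₁ a), f (T.compSet v₁ b),
          f (T.compSet v₁ c)].take 2 ∧
          s(([f (T.compSet v₁ a), f (T.compSet v₁ b), f (T.compSet v₁ c)].get ⟨2, h⟩), x) ∈
            tripletCoverOf T f}
          = {f (T.compSet v₁ a), f (T.compSet v₁ b)} := by
        ext x
        simp only [Set.mem_setOf_eq, List.take, List.get, Set.mem_insert_iff,
          Set.mem_singleton_iff, List.mem_cons, List.not_mem_nil, or_false]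
        constructor
        · rintro ⟨h1, _⟩; exact h1
        · rintro (rfl | rfl)
          · exact ⟨Or.inl rfl, cord_mem_L hv₁ hca haa (Ne.symm hac)⟩
          · exact ⟨Or.inr rfl, cord_mem_L hv₁ hca hba (Ne.symm hbc)⟩
      rw [hset]
      exact Set.ncard_pair hab'

end Induction

end XTree
namespace XTree

variable {α : Type} {X : Set α} {T : XTree α X} {f : Set α → α}

section Step

lemma step (hf : IsStableTransversal (clus T) f) {v w uo un : T.V}
    (hnb : T.tree.neighborSet v = {w, uo, un})
    (hw1 : w ≠ uo) (hw2 : w ≠ un) (h12 : uo ≠ un)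
    {S : Finset T.V} (hvS : v ∉ S) (hwS : w ∈ S)
    (hold : f (T.compSet w v) ∈ T.compSet v uo)
    {ord : List α} (hinv : Inv T f S ord) :
    Inv T f (insert v S) (ord ++ [f (T.compSet v un)]) := by
  classical
  obtain ⟨hSne, hSint, hSconn, hnodup, hmem, h2, hedge, hncard⟩ := hinv
  have haw := nadj₁ hnb; have hao := nadj₂ hnb; have han := nadj₃ hnb
  have hvint := v_interior hnb h12
  have hnewmem : f (T.compSet v un) ∈ T.compSet v un := fmem hf han
  have hnew_not_old : f (T.compSet v un) ∉ OldL T f S := by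
    rintro ⟨p, hp, cc, hcc, heq⟩
    exact new_notin hf hnb hw1 hw2 h12 hSconn hvS hwS hold hp hcc heq.symm
  have hBo_old : f (T.compSet v uo) ∈ OldL T f S :=
    ⟨w, hwS, v, haw.symm, (fE_eq hf hnb hw1 hw2 h12 hold).symm⟩
  have hD_old : f (T.compSet v w) ∈ OldL T f S := by
    obtain ⟨cc, hcc, hccv, heq⟩ := fD_old hf hnb hw1 hw2 h12 hSint hwS hold
    exact ⟨w, hwS, cc, hcc, heq⟩
  have hOld_eq : OldL T f (insert v S) = insert (f (T.compSet v un)) (OldL T f S) := by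
    ext x
    constructor
    · rintro ⟨p, hp, u, hu, rfl⟩
      rw [Finset.mem_insert] at hp
      rcases hp with rfl | hp
      · have humem : u ∈ ({w, uo, un} : Set T.V) := hnb ▸ hu
        rcases humem with h | h | h
        · rw [h]; exact Or.inr hD_old
        · rw [h]; exact Or.inr hBo_old
        · rw [h]; exact Or.inl rfl
      · exact Or.inr ⟨p, hp, u, hu, rfl⟩
    · rintro (rfl | ⟨p, hp, u, hu, rfl⟩)
      · exact ⟨v, Finset.mem_insert_self _ _, un, han, rfl⟩
      · exact ⟨p, Finset.mem_insert_of_mem hp, u, hu, rfl⟩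
  have hnewnotord : f (T.compSet v un) ∉ ord := fun hc => hnew_not_old ((hmem _).1 hc)
  -- the two old neighbours of the new label
  have hBoD_ne : f (T.compSet v uo) ≠ f (T.compSet v w) := by
    intro h
    have h1 := fmem hf hao
    have h2' := fmem hf haw
    rw [← h] at h2'
    exact compSet_disjoint hao haw (Ne.symm hw1) h1 h2'
  -- the key set identity
  have hkey : {b | b ∈ ord ∧ s(f (T.compSet v un), b) ∈ tripletCoverOf T f}
      = {f (T.compSet v uo), f (T.compSet v w)} := by
    ext b
    simp only [Set.mem_setOf_eq, Set.mem_insert_iff, Set.mem_singleton_iff]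
    constructor
    · rintro ⟨hbord, hcord⟩
      have hbold : b ∈ OldL T f S := (hmem b).1 hbord
      obtain ⟨t, m1, m2, htint, hadj1, hadj2, hne12, heqs⟩ := hcord
      rw [Sym2.eq_iff] at heqs
      rcases heqs with ⟨hx1, hb1⟩ | ⟨hx2, hb2⟩
      · subst hb1
        exact partner_char hf hnb hw1 hw2 h12 hSint hSconn hvS hwS hold hadj1 hadj2
          hne12 hx1.symm hbold
      · subst hb2
        exact partner_char hf hnb hw1 hw2 h12 hSint hSconn hvS hwS hold hadj2 hadj1
          (Ne.symm hne12) hx2.symm hbold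
    · rintro (rfl | rfl)
      · exact ⟨(hmem _).2 hBo_old,
          cord_mem_L hvint han hao (Ne.symm h12)⟩
      · exact ⟨(hmem _).2 hD_old,
          cord_mem_L hvint han haw (Ne.symm hw2)⟩
  refine ⟨⟨v, Finset.mem_insert_self _ _⟩, ?_, ?_, ?_, ?_, ?_⟩
  · intro p hp
    rw [Finset.mem_insert] at hp
    rcases hp with rfl | hp
    · exact hvint
    · exact hSint p hp
  · -- connectivity
    have hconnV : ∀ q ∈ S, ∃ pw : T.tree.Walk v q,
        ∀ z ∈ pw.support, z ∈ ((insert v S : Finset T.V) : Set T.V) := by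
      intro q hq
      obtain ⟨pw, hpw⟩ := hSconn w hwS q hq
      refine ⟨SimpleGraph.Walk.cons haw pw, ?_⟩
      intro z hz
      rw [SimpleGraph.Walk.support_cons, List.mem_cons] at hz
      rcases hz with rfl | hz
      · simp
      · simp only [Finset.coe_insert, Set.mem_insert_iff]
        exact Or.inr (hpw z hz)
    intro p hp q hq
    rw [Finset.mem_insert] at hp hq
    rcases hp with rfl | hp
    · rcases hq with rfl | hq
      · exact ⟨SimpleGraph.Walk.nil, by simp⟩
      · exact hconnV q hq
    · rcases hq with rfl | hq
      · obtain ⟨pw, hpw⟩ := hconnV p hp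
        exact ⟨pw.reverse, by intro z hz; rw [SimpleGraph.Walk.support_reverse,
          List.mem_reverse] at hz; exact hpw z hz⟩
      · obtain ⟨pw, hpw⟩ := hSconn p hp q hq
        refine ⟨pw, fun z hz => ?_⟩
        simp only [Finset.coe_insert, Set.mem_insert_iff]
        exact Or.inr (hpw z hz)
  · -- nodup
    rw [List.nodup_append]
    exact ⟨hnodup, List.nodup_singleton _, by
      intro x hx y hy
      rw [List.mem_singleton] at hy
      subst hy
      rintro rfl
      exact hnewnotord hx⟩
  · -- membership
    intro x
    rw [List.mem_append, List.mem_singleton, hOld_eq, Set.mem_insert_iff, hmem x, or_comm]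
  · -- the 2d-tree conditions
    have hlen : (ord ++ [f (T.compSet v un)]).length = ord.length + 1 := by simp
    refine ⟨by rw [hlen]; omega, ?_, ?_⟩
    · have hg0 : (ord ++ [f (T.compSet v un)]).get ⟨0, by rw [hlen]; omega⟩
          = ord.get ⟨0, by omega⟩ := by
        rw [List.get_eq_getElem, List.get_eq_getElem]
        simp only [Fin.val_mk]
        exact List.getElem_append_left (by omega)
      have hg1 : (ord ++ [f (T.compSet v un)]).get ⟨1, by rw [hlen]; omega⟩
          = ord.get ⟨1, by omega⟩ := by
        rw [List.get_eq_getElem, List.get_eq_getElem]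
        simp only [Fin.val_mk]
        exact List.getElem_append_left (by omega)
      rw [hg0, hg1]
      exact hedge
    · intro i h hi2
      by_cases hilen : i < ord.length
      · have hg : (ord ++ [f (T.compSet v un)]).get ⟨i, h⟩ = ord.get ⟨i, hilen⟩ := by
          rw [List.get_eq_getElem, List.get_eq_getElem, List.getElem_append_left hilen]
        have ht : (ord ++ [f (T.compSet v un)]).take i = ord.take i :=
          List.take_append_of_le_length (by omega)
        rw [hg, ht]
        exact hncard i hilen hi2
      · have hieq : i = ord.length := by rw [hlen] at h; omega
        subst hieq
        have hg : (ord ++ [f (T.compSet v un)]).get ⟨ord.length, h⟩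
            = f (T.compSet v un) := by
          rw [List.get_eq_getElem]
          simp only [Fin.val_mk]
          rw [List.getElem_append_right (by omega)]
          simp
        have ht : (ord ++ [f (T.compSet v un)]).take ord.length = ord := by
          rw [List.take_append_of_le_length (by omega), List.take_length]
        rw [hg, ht, hkey]
        exact Set.ncard_pair hBoD_ne

end Step

end XTree
namespace XTree

variable {α : Type} {X : Set α} {T : XTree α X} {f : Set α → α}

section Grow

lemma exit_aux {S : Finset T.V} {z : T.V} :
    ∀ (a : T.V) (p : T.tree.Walk a z), p.IsPath → a ∈ S → z ∉ S → T.IsInterior z →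
      ∃ v w, T.IsInterior v ∧ v ∉ S ∧ w ∈ S ∧ T.tree.Adj v w := by
  intro a p
  induction p with
  | nil => intro _ ha hzS _; exact absurd ha hzS
  | @cons x y _ h q ih =>
    intro hp ha hzS hz
    by_cases hy : y ∈ S
    · exact ih hp.of_cons hy hzS hz
    · cases q with
      | nil => exact ⟨y, x, hz, hy, ha, h.symm⟩
      | @cons _ d _ h' q' =>
        have hxd : x ≠ d := by
          have := hp.support_nodup
          simp only [SimpleGraph.Walk.support_cons, List.nodup_cons] at this
          intro hc
          exact this.1 (by rw [hc]; simp [SimpleGraph.Walk.start_mem_support])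
        exact ⟨y, x, interior_of_two_nbrs h.symm h' hxd, hy, ha, h.symm⟩

lemma exit_vertex {S : Finset T.V} (hne : S.Nonempty) {z : T.V}
    (hz : T.IsInterior z) (hzS : z ∉ S) :
    ∃ v w, T.IsInterior v ∧ v ∉ S ∧ w ∈ S ∧ T.tree.Adj v w := by
  obtain ⟨w₀, hw₀⟩ := hne
  exact exit_aux w₀ (T.treePath w₀ z) (T.treePath_isPath w₀ z) hw₀ hzS hz

lemma nbrs_with (hT : T.IsFullyResolved) {v w : T.V} (hv : T.IsInterior v)
    (hw : T.tree.Adj v w) :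
    ∃ u1 u2, w ≠ u1 ∧ w ≠ u2 ∧ u1 ≠ u2 ∧ T.tree.neighborSet v = {w, u1, u2} := by
  obtain ⟨a, b, c, hab, hac, hbc, hnb⟩ := interior_nbrs hT hv
  have hwmem : w ∈ ({a, b, c} : Set T.V) := hnb ▸ hw
  rcases hwmem with h | h | h
  · exact ⟨b, c, by rw [h]; exact hab, by rw [h]; exact hac, hbc,
      by rw [hnb, h]⟩
  · refine ⟨a, c, by rw [h]; exact Ne.symm hab, by rw [h]; exact hbc, hac, ?_⟩
    rw [hnb, h]; ext z; simp; tauto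
  · refine ⟨a, b, by rw [h]; exact Ne.symm hac, by rw [h]; exact Ne.symm hbc, hab, ?_⟩
    rw [hnb, h]; ext z; simp; tauto

lemma grow (hT : T.IsFullyResolved) (hf : IsStableTransversal (clus T) f) :
    ∀ (k : ℕ) (S : Finset T.V) (ord : List α), Inv T f S ord →
      Fintype.card T.V - S.card ≤ k →
      ∃ S' ord', Inv T f S' ord' ∧ ∀ p, T.IsInterior p → p ∈ S' := by
  intro k
  induction k with
  | zero =>
    intro S ord hinv hk
    refine ⟨S, ord, hinv, ?_⟩
    intro p hp
    have : S = Finset.univ := by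
      apply Finset.eq_univ_of_card
      have h1 := Finset.card_le_univ S
      omega
    rw [this]; exact Finset.mem_univ p
  | succ k ih =>
    intro S ord hinv hk
    by_cases hall : ∀ p, T.IsInterior p → p ∈ S
    · exact ⟨S, ord, hinv, hall⟩
    · push_neg at hall
      obtain ⟨z, hz, hzS⟩ := hall
      obtain ⟨v, w, hvint, hvS, hwS, hadj⟩ := exit_vertex hinv.1 hz hzS
      obtain ⟨u1, u2, hw1, hw2, h12, hnb⟩ := nbrs_with hT hvint hadj
      have haw := nadj₁ hnb
      have hEmem : f (T.compSet w v) ∈ T.compSet v u1 ∪ T.compSet v u2 := by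
        rw [← compSet_split hnb hw1 hw2 h12]
        exact fmem hf haw.symm
      have hcard : Fintype.card T.V - (insert v S).card ≤ k := by
        rw [Finset.card_insert_of_notMem hvS]
        omega
      rcases hEmem with hE | hE
      · exact ih _ _ (step hf hnb hw1 hw2 h12 hvS hwS hE hinv) hcard
      · have hnb' : T.tree.neighborSet v = {w, u2, u1} := by
          rw [hnb]; ext y; simp; tauto
        exact ih _ _ (step hf hnb' hw2 hw1 (Ne.symm h12) hvS hwS hE hinv) hcard

end Grow

section Leaf

lemma compSet_leaf (hf : IsStableTransversal (clus T) f) {x : α} (hx : x ∈ X)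
    {v0 : T.V} (hnb : T.tree.neighborSet (T.ι x) = {v0}) :
    f (T.compSet v0 (T.ι x)) = x := by
  have hadj : T.tree.Adj (T.ι x) v0 := by
    rw [← SimpleGraph.mem_neighborSet, hnb]; rfl
  have hsingle : T.compSet v0 (T.ι x) = {x} := by
    ext a
    constructor
    · rintro ⟨ha, hr⟩
      by_contra hax
      have hne : T.ι a ≠ T.ι x := fun hc => hax (T.ι_injOn ha hx hc)
      obtain ⟨u, hu, hr2⟩ := reach_dir hne
      have hu' : u = v0 := by
        have : u ∈ T.tree.neighborSet (T.ι x) := hu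
        rw [hnb] at this; exact this
      rw [hu'] at hr2
      exact reach_asymm hadj.symm hr2 hr
    · rintro rfl
      exact ⟨hx, reach_refl hadj.ne⟩
  have := hf.1 _ (compSet_mem_clus hadj.symm)
  rw [hsingle] at this ⊢
  exact this

end Leaf

end XTree

open XTree in
/-- If `L` is a stable triplet cover of a fully-resolved `X`-tree `T`
with `n := |X| ≥ 3`, then the graph `(X, L)` is a 2d-tree. -/
theorem stableTripletCover_is2dTree {α : Type} (X : Set α) (hfin : X.Finite)
    (hcard : 3 ≤ X.ncard) (T : XTree α X) (hT : T.IsFullyResolved)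
    (L : Set (Sym2 α)) (hL : IsStableTripletCover T L) :
    Is2dTree X L := by
  classical
  obtain ⟨f, hf, rfl⟩ := hL
  have hXne : X.Nonempty := Set.nonempty_of_ncard_ne_zero (by omega)
  obtain ⟨x₀, hx₀⟩ := hXne
  obtain ⟨v₁, hv₁nb⟩ := leaf_nbr (T := T) x₀ hx₀
  have hv₁ : T.IsInterior v₁ := leaf_nbr_interior hcard hfin hx₀ hv₁nb
  obtain ⟨a, b, c, hab, hac, hbc, hnb⟩ := interior_nbrs hT hv₁
  obtain ⟨S', ord, hinv, hall⟩ := grow hT hf (Fintype.card T.V) _ _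
    (base hf hv₁ hnb hab hac hbc) (Nat.sub_le _ _)
  obtain ⟨hSne, hSint, hSconn, hnodup, hmem, h2, hedge, hncard⟩ := hinv
  refine ⟨ord, hnodup, ?_, h2, hedge, hncard⟩
  intro x
  rw [hmem x]
  constructor
  · rintro ⟨p, hp, u, hu, rfl⟩
    exact (fmem hf hu).1
  · intro hx
    obtain ⟨v0, hv0⟩ := leaf_nbr (T := T) x hx
    have hv0i : T.IsInterior v0 := leaf_nbr_interior hcard hfin hx hv0
    have hadj : T.tree.Adj (T.ι x) v0 := by
      rw [← SimpleGraph.mem_neighborSet, hv0]; rfl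
    exact ⟨v0, hall _ hv0i, T.ι x, hadj.symm, (compSet_leaf hf hx hv0).symm⟩
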